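/- Consider the three-party instance v¹ = (0.5, 0.5, 0), v² = (0, 0.6, 0.4), v³ = (0, 0.2, 0.8), one seat per step. The unique method satisfying global quota and ex-ante proportionality yields the joint distribution: ℙ[seats go to (1,2,3)] = 0.5, ℙ[(2,2,3)] = 0.1, ℙ[(2,3,2)] = 0.2, ℙ[(2,3,3)] = 0.2, where the triple lists the winner of steps 1, 2, 3. Under this distribution ℙ[a_2³ = 1 | a_2¹ = 0] = 0 < 0.2 = ℙ[a_2³ = 1], so negative correlation fails. -/

import Mathlib

/-- Three-party instance `v¹ = (0.5, 0.5, 0)`,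
`v² = (0, 0.6, 0.4)`, `v³ = (0, 0.2, 0.8)`, one seat per step. `P i j k` is the
probability that the seats of steps 1,2,3 go to parties `i,j,k` (0-indexed).
Any method satisfying local quota, global quota (on every realization of
positive probability) and ex-ante proportionality has the unique joint
distribution `ℙ[(1,2,3)] = 0.5`, `ℙ[(2,2,3)] = 0.1`, `ℙ[(2,3,2)] = 0.2`,
`ℙ[(2,3,3)] = 0.2`; in particular
`ℙ[a₂³ = 1 ∧ a₂¹ = 0] = 0` while `ℙ[a₂³ = 1] = 0.2`, so negative correlation
fails. -/
theorem stmt16 (P : Fin 3 → Fin 3 → Fin 3 → ℝ)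
    (v1 v2 v3 : Fin 3 → ℝ)
    (hv1 : v1 = ![1 / 2, 1 / 2, 0])
    (hv2 : v2 = ![0, 3 / 5, 2 / 5])
    (hv3 : v3 = ![0, 1 / 5, 4 / 5])
    (hP0 : ∀ i j k, 0 ≤ P i j k)
    (hPsum : ∑ i, ∑ j, ∑ k, P i j k = 1)
    -- local quota: a party with zero votes in a step never wins that step:
    (hsupp : ∀ i j k, 0 < P i j k → 0 < v1 i ∧ 0 < v2 j ∧ 0 < v3 k)
    -- global quota at each of the three steps, on every realization of
    -- positive probability:
    (hquota : ∀ i j k, 0 < P i j k → ∀ m : Fin 3,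
      (((if m = i then (1 : ℝ) else 0) = (⌊v1 m⌋ : ℝ) ∨
        (if m = i then (1 : ℝ) else 0) = (⌈v1 m⌉ : ℝ)) ∧
       (((if m = i then (1 : ℝ) else 0) + (if m = j then 1 else 0)
           = (⌊v1 m + v2 m⌋ : ℝ)) ∨
        ((if m = i then (1 : ℝ) else 0) + (if m = j then 1 else 0)
           = (⌈v1 m + v2 m⌉ : ℝ))) ∧
       (((if m = i then (1 : ℝ) else 0) + (if m = j then 1 else 0)
           + (if m = k then 1 else 0) = (⌊v1 m + v2 m + v3 m⌋ : ℝ)) ∨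
        ((if m = i then (1 : ℝ) else 0) + (if m = j then 1 else 0)
           + (if m = k then 1 else 0) = (⌈v1 m + v2 m + v3 m⌉ : ℝ)))))
    -- ex-ante proportionality at each step:
    (hexante1 : ∀ m, ∑ j, ∑ k, P m j k = v1 m)
    (hexante2 : ∀ m, ∑ i, ∑ k, P i m k = v2 m)
    (hexante3 : ∀ m, ∑ i, ∑ j, P i j m = v3 m) :
    P 0 1 2 = 1 / 2 ∧ P 1 1 2 = 1 / 10 ∧ P 1 2 1 = 1 / 5 ∧ P 1 2 2 = 1 / 5 ∧
      ((∑ j, P 0 j 1) + (∑ j, P 2 j 1) = 0) ∧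
      (∑ i, ∑ j, P i j 1) = 1 / 5 := by
  subst hv1 hv2 hv3
  have hc11 : (⌈(11:ℝ)/10⌉ : ℤ) = 2 := by rw [Int.ceil_eq_iff]; norm_num
  have hc65 : (⌈(6:ℝ)/5⌉ : ℤ) = 2 := by rw [Int.ceil_eq_iff]; norm_num
  have hz000 : P 0 0 0 = 0 := by
    by_contra h
    have hp : 0 < P 0 0 0 := lt_of_le_of_ne (hP0 _ _ _) (Ne.symm h)
    have hs := hsupp _ _ _ hp
    norm_num [Fin.ext_iff] at hs
  have hz001 : P 0 0 1 = 0 := by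
    by_contra h
    have hp : 0 < P 0 0 1 := lt_of_le_of_ne (hP0 _ _ _) (Ne.symm h)
    have hs := hsupp _ _ _ hp
    norm_num [Fin.ext_iff] at hs
  have hz002 : P 0 0 2 = 0 := by
    by_contra h
    have hp : 0 < P 0 0 2 := lt_of_le_of_ne (hP0 _ _ _) (Ne.symm h)
    have hs := hsupp _ _ _ hp
    norm_num [Fin.ext_iff] at hs
  have hz010 : P 0 1 0 = 0 := by
    by_contra h
    have hp : 0 < P 0 1 0 := lt_of_le_of_ne (hP0 _ _ _) (Ne.symm h)
    have hs := hsupp _ _ _ hp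
    norm_num [Fin.ext_iff] at hs
  have hz011 : P 0 1 1 = 0 := by
    by_contra h
    have hp : 0 < P 0 1 1 := lt_of_le_of_ne (hP0 _ _ _) (Ne.symm h)
    have hq := (hquota _ _ _ hp 2).2.2
    norm_num [Fin.ext_iff, hc65, Matrix.cons_val_two, Matrix.tail_cons, Matrix.head_cons] at hq
  have hz020 : P 0 2 0 = 0 := by
    by_contra h
    have hp : 0 < P 0 2 0 := lt_of_le_of_ne (hP0 _ _ _) (Ne.symm h)
    have hs := hsupp _ _ _ hp
    norm_num [Fin.ext_iff] at hs
  have hz021 : P 0 2 1 = 0 := by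
    by_contra h
    have hp : 0 < P 0 2 1 := lt_of_le_of_ne (hP0 _ _ _) (Ne.symm h)
    have hq := (hquota _ _ _ hp 1).2.1
    norm_num [Fin.ext_iff, hc11] at hq
  have hz022 : P 0 2 2 = 0 := by
    by_contra h
    have hp : 0 < P 0 2 2 := lt_of_le_of_ne (hP0 _ _ _) (Ne.symm h)
    have hq := (hquota _ _ _ hp 1).2.1
    norm_num [Fin.ext_iff, hc11] at hq
  have hz100 : P 1 0 0 = 0 := by
    by_contra h
    have hp : 0 < P 1 0 0 := lt_of_le_of_ne (hP0 _ _ _) (Ne.symm h)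
    have hs := hsupp _ _ _ hp
    norm_num [Fin.ext_iff] at hs
  have hz101 : P 1 0 1 = 0 := by
    by_contra h
    have hp : 0 < P 1 0 1 := lt_of_le_of_ne (hP0 _ _ _) (Ne.symm h)
    have hs := hsupp _ _ _ hp
    norm_num [Fin.ext_iff] at hs
  have hz102 : P 1 0 2 = 0 := by
    by_contra h
    have hp : 0 < P 1 0 2 := lt_of_le_of_ne (hP0 _ _ _) (Ne.symm h)
    have hs := hsupp _ _ _ hp
    norm_num [Fin.ext_iff] at hs
  have hz110 : P 1 1 0 = 0 := by
    by_contra h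
    have hp : 0 < P 1 1 0 := lt_of_le_of_ne (hP0 _ _ _) (Ne.symm h)
    have hs := hsupp _ _ _ hp
    norm_num [Fin.ext_iff] at hs
  have hz111 : P 1 1 1 = 0 := by
    by_contra h
    have hp : 0 < P 1 1 1 := lt_of_le_of_ne (hP0 _ _ _) (Ne.symm h)
    have hq := (hquota _ _ _ hp 2).2.2
    norm_num [Fin.ext_iff, hc65, Matrix.cons_val_two, Matrix.tail_cons, Matrix.head_cons] at hq
  have hz120 : P 1 2 0 = 0 := by
    by_contra h
    have hp : 0 < P 1 2 0 := lt_of_le_of_ne (hP0 _ _ _) (Ne.symm h)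
    have hs := hsupp _ _ _ hp
    norm_num [Fin.ext_iff] at hs
  have hz200 : P 2 0 0 = 0 := by
    by_contra h
    have hp : 0 < P 2 0 0 := lt_of_le_of_ne (hP0 _ _ _) (Ne.symm h)
    have hs := hsupp _ _ _ hp
    norm_num [Fin.ext_iff] at hs
  have hz201 : P 2 0 1 = 0 := by
    by_contra h
    have hp : 0 < P 2 0 1 := lt_of_le_of_ne (hP0 _ _ _) (Ne.symm h)
    have hs := hsupp _ _ _ hp
    norm_num [Fin.ext_iff] at hs
  have hz202 : P 2 0 2 = 0 := by
    by_contra h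
    have hp : 0 < P 2 0 2 := lt_of_le_of_ne (hP0 _ _ _) (Ne.symm h)
    have hs := hsupp _ _ _ hp
    norm_num [Fin.ext_iff] at hs
  have hz210 : P 2 1 0 = 0 := by
    by_contra h
    have hp : 0 < P 2 1 0 := lt_of_le_of_ne (hP0 _ _ _) (Ne.symm h)
    have hs := hsupp _ _ _ hp
    norm_num [Fin.ext_iff] at hs
  have hz211 : P 2 1 1 = 0 := by
    by_contra h
    have hp : 0 < P 2 1 1 := lt_of_le_of_ne (hP0 _ _ _) (Ne.symm h)
    have hs := hsupp _ _ _ hp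
    norm_num [Fin.ext_iff, Matrix.cons_val_two, Matrix.tail_cons, Matrix.head_cons] at hs
  have hz212 : P 2 1 2 = 0 := by
    by_contra h
    have hp : 0 < P 2 1 2 := lt_of_le_of_ne (hP0 _ _ _) (Ne.symm h)
    have hs := hsupp _ _ _ hp
    norm_num [Fin.ext_iff, Matrix.cons_val_two, Matrix.tail_cons, Matrix.head_cons] at hs
  have hz220 : P 2 2 0 = 0 := by
    by_contra h
    have hp : 0 < P 2 2 0 := lt_of_le_of_ne (hP0 _ _ _) (Ne.symm h)
    have hs := hsupp _ _ _ hp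
    norm_num [Fin.ext_iff] at hs
  have hz221 : P 2 2 1 = 0 := by
    by_contra h
    have hp : 0 < P 2 2 1 := lt_of_le_of_ne (hP0 _ _ _) (Ne.symm h)
    have hs := hsupp _ _ _ hp
    norm_num [Fin.ext_iff, Matrix.cons_val_two, Matrix.tail_cons, Matrix.head_cons] at hs
  have hz222 : P 2 2 2 = 0 := by
    by_contra h
    have hp : 0 < P 2 2 2 := lt_of_le_of_ne (hP0 _ _ _) (Ne.symm h)
    have hs := hsupp _ _ _ hp
    norm_num [Fin.ext_iff, Matrix.cons_val_two, Matrix.tail_cons, Matrix.head_cons] at hs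
  have e1 := hexante1 0
  have e2 := hexante2 1
  have e3 := hexante3 1
  simp only [Fin.sum_univ_three, Matrix.cons_val_zero, Matrix.cons_val_one,
    Matrix.head_cons, Matrix.cons_val_two, Matrix.tail_cons] at e1 e2 e3 hPsum ⊢
  refine ⟨?_, ?_, ?_, ?_, ?_, ?_⟩ <;> linarith
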